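/- Second isomorphism theorem for hom-modules: let M be a right R-hom-module over a non-unital hom-associative ring R, and let N and L be hom-submodules of M. Then N ∩ L is a hom-submodule of N, L is a hom-submodule of N + L, and N/(N ∩ L) ≅ (N + L)/L as right R-hom-modules. -/
import Mathlib


/-- A non-unital hom-associative ring structure on an additive abelian group `R`:
a biadditive multiplication `mul` and an additive twisting map `α` satisfying
`α a * (b * c) = (a * b) * α c`. -/
structure IsHomRing {R : Type*} [AddCommGroup R] (mul : R → R → R) (α : R → R) : Prop where
  add_mul : ∀ a b c : R, mul (a + b) c = mul a c + mul b c
  mul_add : ∀ a b c : R, mul a (b + c) = mul a b + mul a c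
  alpha_add : ∀ a b : R, α (a + b) = α a + α b
  hom_assoc : ∀ a b c : R, mul (α a) (mul b c) = mul (mul a b) (α c)

/-- A right `R`-hom-module structure on an additive abelian group `M`:
a biadditive scalar multiplication `smul : M → R → M` and an additive map `αM`
satisfying `αM m • (r * s) = (m • r) • αR s`. -/
structure IsHomModule {R M : Type*} [AddCommGroup R] [AddCommGroup M]
    (mul : R → R → R) (αR : R → R) (smul : M → R → M) (αM : M → M) : Prop where
  add_smul : ∀ (m n : M) (r : R), smul (m + n) r = smul m r + smul n r
  smul_add : ∀ (m : M) (r s : R), smul m (r + s) = smul m r + smul m s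
  alpha_add : ∀ m n : M, αM (m + n) = αM m + αM n
  hom_assoc : ∀ (m : M) (r s : R), smul (αM m) (mul r s) = smul (smul m r) (αR s)

/-- A hom-submodule: an additive subgroup (as a set) closed under the scalar
multiplication and invariant under the twisting map. -/
structure IsHomSubmodule {R M : Type*} [AddCommGroup M]
    (smul : M → R → M) (αM : M → M) (N : Set M) : Prop where
  zero_mem : (0 : M) ∈ N
  add_mem : ∀ a b : M, a ∈ N → b ∈ N → a + b ∈ N
  neg_mem : ∀ a : M, a ∈ N → -a ∈ N
  smul_mem : ∀ a : M, a ∈ N → ∀ r : R, smul a r ∈ N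
  alpha_mem : ∀ a : M, a ∈ N → αM a ∈ N

/-- A morphism of right `R`-hom-modules: an additive map commuting with the
twisting maps and preserving scalar multiplication. -/
def IsHomModuleHom {R M M' : Type*} [AddCommGroup M] [AddCommGroup M']
    (smul : M → R → M) (αM : M → M) (smul' : M' → R → M') (αM' : M' → M')
    (f : M → M') : Prop :=
  (∀ a b : M, f (a + b) = f a + f b) ∧ (∀ m : M, f (αM m) = αM' (f m)) ∧
    ∀ (m : M) (r : R), f (smul m r) = smul' (f m) r

/-- A right hom-module is hom-noetherian if it has no infinite strictly
ascending chain of hom-submodules. -/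
def HomNoetherian {R M : Type*} [AddCommGroup M] (smul : M → R → M) (αM : M → M) : Prop :=
  ¬ ∃ c : ℕ → Set M, (∀ n, IsHomSubmodule smul αM (c n)) ∧ ∀ n, c n ⊂ c (n + 1)

/-- the second isomorphism theorem for hom-modules:
N ∩ L is a hom-submodule of N, L is a hom-submodule of N + L, and
N/(N ∩ L) ≅ (N + L)/L as right R-hom-modules. Here K is the additive subgroup
whose underlying set is N + L, and the subtype and quotient hom-module
operations are the induced ones. -/
theorem second_isomorphism_theorem {R M : Type*} [AddCommGroup R] [AddCommGroup M]
    (mul : R → R → R) (αR : R → R) (hR : IsHomRing mul αR)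
    (smul : M → R → M) (αM : M → M) (hM : IsHomModule mul αR smul αM)
    (N L : AddSubgroup M)
    (hN : IsHomSubmodule smul αM (N : Set M)) (hL : IsHomSubmodule smul αM (L : Set M))
    (K : AddSubgroup M)
    (hK : (K : Set M) = {x : M | ∃ n ∈ N, ∃ l ∈ L, x = n + l})
    -- the induced hom-module operations on the subtypes N and K
    (sN : N → R → N) (aN : N → N)
    (hsN : ∀ (x : N) (r : R), (sN x r : M) = smul (x : M) r)
    (haN : ∀ x : N, (aN x : M) = αM (x : M))
    (sK : K → R → K) (aK : K → K)
    (hsK : ∀ (x : K) (r : R), (sK x r : M) = smul (x : M) r)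
    (haK : ∀ x : K, (aK x : M) = αM (x : M))
    -- the induced hom-module operations on the quotients N/(N ∩ L) and (N + L)/L
    (q1smul : N ⧸ L.addSubgroupOf N → R → N ⧸ L.addSubgroupOf N)
    (q1α : N ⧸ L.addSubgroupOf N → N ⧸ L.addSubgroupOf N)
    (hq1smul : ∀ (x : N) (r : R),
      q1smul (QuotientAddGroup.mk x) r = QuotientAddGroup.mk (sN x r))
    (hq1α : ∀ x : N, q1α (QuotientAddGroup.mk x) = QuotientAddGroup.mk (aN x))
    (q2smul : K ⧸ L.addSubgroupOf K → R → K ⧸ L.addSubgroupOf K)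
    (q2α : K ⧸ L.addSubgroupOf K → K ⧸ L.addSubgroupOf K)
    (hq2smul : ∀ (x : K) (r : R),
      q2smul (QuotientAddGroup.mk x) r = QuotientAddGroup.mk (sK x r))
    (hq2α : ∀ x : K, q2α (QuotientAddGroup.mk x) = QuotientAddGroup.mk (aK x)) :
    IsHomSubmodule smul αM ((N : Set M) ∩ (L : Set M)) ∧
    (L : Set M) ⊆ (K : Set M) ∧
    ∃ g : N ⧸ L.addSubgroupOf N → K ⧸ L.addSubgroupOf K,
      Function.Bijective g ∧ IsHomModuleHom q1smul q1α q2smul q2α g := by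
  have hNK : ∀ x : M, x ∈ N → x ∈ K := by
    intro x hx
    have : x ∈ (K : Set M) := by
      rw [hK]; exact ⟨x, hx, 0, L.zero_mem, by simp⟩
    exact this
  have hLK : (L : Set M) ⊆ (K : Set M) := by
    intro x hx
    rw [hK]; exact ⟨0, N.zero_mem, x, hx, by simp⟩
  refine ⟨⟨⟨hN.zero_mem, hL.zero_mem⟩,
      fun a b ha hb => ⟨hN.add_mem a b ha.1 hb.1, hL.add_mem a b ha.2 hb.2⟩,
      fun a ha => ⟨hN.neg_mem a ha.1, hL.neg_mem a ha.2⟩,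
      fun a ha r => ⟨hN.smul_mem a ha.1 r, hL.smul_mem a ha.2 r⟩,
      fun a ha => ⟨hN.alpha_mem a ha.1, hL.alpha_mem a ha.2⟩⟩, hLK, ?_⟩
  -- inclusion N →+ K
  let ι : N →+ K :=
    { toFun := fun x => ⟨(x : M), hNK x x.2⟩
      map_zero' := by ext; simp
      map_add' := by intro a b; ext; simp }
  have hcond : L.addSubgroupOf N ≤ (L.addSubgroupOf K).comap ι := by
    intro x hx
    exact hx
  let g : N ⧸ L.addSubgroupOf N → K ⧸ L.addSubgroupOf K :=
    QuotientAddGroup.map _ _ ι hcond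
  have hg : ∀ x : N, g (QuotientAddGroup.mk x) = QuotientAddGroup.mk (ι x) := fun x => rfl
  refine ⟨g, ⟨?_, ?_⟩, ?_, ?_, ?_⟩
  · -- injective
    intro x y
    refine QuotientAddGroup.induction_on x fun a => QuotientAddGroup.induction_on y fun b h => ?_
    rw [hg, hg, QuotientAddGroup.eq] at h
    rw [QuotientAddGroup.eq]
    have h' : ((-ι a + ι b : K) : M) ∈ L := h
    have : ((-a + b : N) : M) ∈ L := by
      simpa [ι] using h'
    exact this
  · -- surjective
    intro y
    refine QuotientAddGroup.induction_on y fun k => ?_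
    obtain ⟨n, hn, l, hl, hnl⟩ : ∃ n ∈ N, ∃ l ∈ L, (k : M) = n + l := by
      have h2 : (↑k : M) ∈ (K : Set M) := k.2
      rw [hK] at h2; exact h2
    refine ⟨QuotientAddGroup.mk ⟨n, hn⟩, ?_⟩
    rw [hg, QuotientAddGroup.eq]
    show ((-(ι ⟨n, hn⟩) + k : K) : M) ∈ L
    have : ((-(ι ⟨n, hn⟩) + k : K) : M) = l := by
      simp [ι, hnl]
    rw [this]; exact hl
  · -- additive
    intro a b
    refine QuotientAddGroup.induction_on a fun x => QuotientAddGroup.induction_on b fun y => ?_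
    show g (QuotientAddGroup.mk (x + y)) = _
    rw [hg, hg, hg, map_add, QuotientAddGroup.mk_add]
  · -- alpha
    intro m
    refine QuotientAddGroup.induction_on m fun x => ?_
    rw [hq1α, hg, hg, hq2α]
    congr 1
    ext
    show ((aN x : N) : M) = (aK (ι x) : M)
    rw [haN, haK]; rfl
  · -- smul
    intro m r
    refine QuotientAddGroup.induction_on m fun x => ?_
    rw [hq1smul, hg, hg, hq2smul]
    congr 1
    ext
    show ((sN x r : N) : M) = (sK (ι x) r : M)
    rw [hsN, hsK]; rfl
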